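/- On the ℂ-vector space M = ℂ[x,y] × ℂ[x,y], define a bilinear product ⋆ by (f, u) ⋆ (g, v) = (f·g, f·v + g·u + (1/2)·(∂f/∂x · ∂g/∂y − ∂f/∂y · ∂g/∂x)). Then ⋆ is associative, and M with componentwise addition, the product ⋆, and unit (1, 0) is an associative unital ℂ-algebra. -/
import Mathlib


noncomputable section

/-- M = ℂ[x,y] × ℂ[x,y], the even part ℂ[x,y] ⊕ Ω²(ℂ[x,y]) of the de Rham complex,
identifying w·dx∧dy with w. -/
abbrev Meven : Type := MvPolynomial (Fin 2) ℂ × MvPolynomial (Fin 2) ℂ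

/-- The Feigin–Shoikhet star product:
(f, u) ⋆ (g, v) = (f·g, f·v + g·u + ½(∂f/∂x·∂g/∂y − ∂f/∂y·∂g/∂x)). -/
def star2 (α β : Meven) : Meven :=
  (α.1 * β.1,
    α.1 * β.2 + β.1 * α.2 +
      ((1 : ℂ) / 2) • (MvPolynomial.pderiv (0 : Fin 2) α.1 * MvPolynomial.pderiv (1 : Fin 2) β.1
        - MvPolynomial.pderiv (1 : Fin 2) α.1 * MvPolynomial.pderiv (0 : Fin 2) β.1))

/-- the product ⋆ on M = ℂ[x,y] × ℂ[x,y] is associative, and M with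
componentwise addition, product ⋆ and unit (1,0) is an associative unital ℂ-algebra:
⋆ is associative, distributes over addition on both sides, is ℂ-bilinear, and (1,0)
is a two-sided unit. -/
theorem stmt6 :
    (∀ α β γ : Meven, star2 (star2 α β) γ = star2 α (star2 β γ)) ∧
    (∀ α β γ : Meven, star2 α (β + γ) = star2 α β + star2 α γ) ∧
    (∀ α β γ : Meven, star2 (α + β) γ = star2 α γ + star2 β γ) ∧
    (∀ (c : ℂ) (α β : Meven), star2 (c • α) β = c • star2 α β) ∧
    (∀ (c : ℂ) (α β : Meven), star2 α (c • β) = c • star2 α β) ∧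
    (∀ α : Meven, star2 (1, 0) α = α) ∧
    (∀ α : Meven, star2 α (1, 0) = α) := by
  refine ⟨?_, ?_, ?_, ?_, ?_, ?_, ?_⟩ <;>
    intros <;>
    simp only [star2, Prod.mk.injEq, Prod.fst_add, Prod.snd_add, Prod.smul_fst, Prod.smul_snd,
      map_add, map_mul, map_smul, MvPolynomial.pderiv_one, map_one, Prod.mk_add_mk,
      Prod.smul_mk, smul_eq_mul, MvPolynomial.pderiv_mul, MvPolynomial.pderiv_C, MvPolynomial.smul_eq_C_mul, map_zero, Prod.ext_iff] <;>
    constructor <;> ring
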